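/- There exists a constant C > 0 such that for all nonnegative f, g ∈ L¹((1+e^x)dxdy) on ℝ², ∬ e^x T(f,g)(x,y) dx dy ≤ C ‖f‖_{L¹((1+e^x)dxdy)} ‖g‖_{L¹((1+e^x)dxdy)}, where T(f,g)(x,y) = ∬∬ Γ_{σx²}(x-(x₁+x₂)/2) Γ_{σy²}(y-(y₁+y₂)/2) x₁⁺ f(x₁,y₁) g(x₂,y₂) dx₁dy₁dx₂dy₂. -/

import Mathlib

open MeasureTheory Real
open scoped ENNReal

noncomputable def gauss (v z : ℝ) : ℝ :=
  (Real.sqrt (2 * Real.pi * v))⁻¹ * Real.exp (-z ^ 2 / (2 * v))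

lemma gauss_nonneg (v z : ℝ) : 0 ≤ gauss v z :=
  mul_nonneg (inv_nonneg.2 (Real.sqrt_nonneg _)) (Real.exp_pos _).le

lemma measurable_gauss (v : ℝ) : Measurable (gauss v) := by
  unfold gauss; fun_prop

lemma lintegral_gauss {v : ℝ} (hv : 0 < v) (m : ℝ) :
    ∫⁻ x : ℝ, ENNReal.ofReal (gauss v (x - m)) = 1 := by
  have h : ∀ x : ℝ, gauss v (x - m) = ProbabilityTheory.gaussianPDFReal m ⟨v, hv.le⟩ x := by
    intro x; simp [gauss, ProbabilityTheory.gaussianPDFReal]; rfl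
  simp_rw [h]
  refine ProbabilityTheory.lintegral_gaussianPDFReal_eq_one m ?_
  intro h0
  have h1 := congrArg NNReal.toReal h0
  simp at h1
  exact hv.ne' h1

lemma exp_mul_gauss {v : ℝ} (hv : 0 < v) (m x : ℝ) :
    Real.exp x * gauss v (x - m) = Real.exp (m + v / 2) * gauss v (x - (m + v)) := by
  have h : Real.exp x * Real.exp (-(x - m) ^ 2 / (2 * v)) =
      Real.exp (m + v / 2) * Real.exp (-(x - (m + v)) ^ 2 / (2 * v)) := by
    rw [← Real.exp_add, ← Real.exp_add]
    congr 1
    field_simp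
    ring
  unfold gauss
  calc Real.exp x * ((Real.sqrt (2 * Real.pi * v))⁻¹ * Real.exp (-(x - m) ^ 2 / (2 * v)))
      = (Real.sqrt (2 * Real.pi * v))⁻¹ * (Real.exp x * Real.exp (-(x - m) ^ 2 / (2 * v))) := by
        ring
    _ = (Real.sqrt (2 * Real.pi * v))⁻¹ *
        (Real.exp (m + v / 2) * Real.exp (-(x - (m + v)) ^ 2 / (2 * v))) := by rw [h]
    _ = Real.exp (m + v / 2) *
        ((Real.sqrt (2 * Real.pi * v))⁻¹ * Real.exp (-(x - (m + v)) ^ 2 / (2 * v))) := by ring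

lemma lintegral_exp_gauss {v : ℝ} (hv : 0 < v) (m : ℝ) :
    ∫⁻ x : ℝ, ENNReal.ofReal (Real.exp x * gauss v (x - m)) =
      ENNReal.ofReal (Real.exp (m + v / 2)) := by
  simp_rw [exp_mul_gauss hv m, ENNReal.ofReal_mul (Real.exp_nonneg _)]
  rw [lintegral_const_mul' _ _ ENNReal.ofReal_ne_top, lintegral_gauss hv, mul_one]

lemma key_bound (x₁ x₂ : ℝ) :
    Real.exp ((x₁ + x₂) / 2) * max x₁ 0 ≤ 2 * ((1 + Real.exp x₁) * (1 + Real.exp x₂)) := by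
  have ha : Real.exp ((x₁ + x₂) / 2) = Real.exp (x₁ / 2) * Real.exp (x₂ / 2) := by
    rw [← Real.exp_add]; ring_nf
  have h1 : max x₁ 0 ≤ 2 * Real.exp (x₁ / 2) := by
    apply max_le
    · nlinarith [Real.add_one_le_exp (x₁ / 2)]
    · positivity
  have h2 : Real.exp (x₁ / 2) * Real.exp (x₁ / 2) = Real.exp x₁ := by
    rw [← Real.exp_add]; ring_nf
  have h3 : Real.exp (x₂ / 2) ≤ 1 + Real.exp x₂ := by
    rcases le_or_gt x₂ 0 with h | h
    · have := Real.exp_le_one_iff.2 (by linarith : x₂ / 2 ≤ 0)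
      nlinarith [Real.exp_pos x₂]
    · have := Real.exp_le_exp.2 (by linarith : x₂ / 2 ≤ x₂)
      nlinarith
  have e1 := Real.exp_pos (x₁ / 2)
  have e2 := Real.exp_pos (x₂ / 2)
  have e3 := Real.exp_pos x₁
  have hm : 0 ≤ max x₁ 0 := le_max_right _ _
  nlinarith [mul_le_mul_of_nonneg_left h1 (mul_pos e1 e2).le,
    mul_le_mul_of_nonneg_left h3 (by positivity : (0:ℝ) ≤ 2 * Real.exp x₁)]

lemma ofReal_integral_le {α : Type*} [MeasurableSpace α] {μ : Measure α} {φ : α → ℝ}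
    (h : 0 ≤ᵐ[μ] φ) :
    ENNReal.ofReal (∫ a, φ a ∂μ) ≤ ∫⁻ a, ENNReal.ofReal (φ a) ∂μ := by
  by_cases hi : Integrable φ μ
  · exact (ofReal_integral_eq_lintegral_ofReal hi h).le
  · rw [integral_undef hi]; simp

lemma layer {α : Type*} [MeasurableSpace α] {μ : Measure α} {ψ : α → ℝ} {Ψ : α → ℝ≥0∞}
    (hψ : ∀ a, 0 ≤ ψ a) (h : ∀ a, ENNReal.ofReal (ψ a) ≤ Ψ a) :
    ENNReal.ofReal (∫ a, ψ a ∂μ) ≤ ∫⁻ a, Ψ a ∂μ :=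
  (ofReal_integral_le (ae_of_all _ hψ)).trans (lintegral_mono h)

noncomputable def kern (v w : ℝ) (f g : ℝ → ℝ → ℝ) (x y x₁ y₁ x₂ y₂ : ℝ) : ℝ≥0∞ :=
  ENNReal.ofReal (gauss v (x - (x₁ + x₂) / 2)) * ENNReal.ofReal (gauss w (y - (y₁ + y₂) / 2)) *
    ENNReal.ofReal (max x₁ 0) * ENNReal.ofReal (f x₁ y₁) * ENNReal.ofReal (g x₂ y₂)

noncomputable def kernP (v w : ℝ) (f g : ℝ → ℝ → ℝ) (p : ℝ × ℝ) (q : (ℝ × ℝ) × ℝ × ℝ) : ℝ≥0∞ :=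
  ENNReal.ofReal (Real.exp p.1) * kern v w f g p.1 p.2 q.1.1 q.1.2 q.2.1 q.2.2

lemma measurable_kernP (v w : ℝ) {f g : ℝ → ℝ → ℝ}
    (hf : Measurable fun p : ℝ × ℝ => f p.1 p.2) (hg : Measurable fun p : ℝ × ℝ => g p.1 p.2) :
    Measurable (Function.uncurry (kernP v w f g)) := by
  unfold Function.uncurry kernP kern
  have h1 : Measurable fun z : (ℝ × ℝ) × (ℝ × ℝ) × ℝ × ℝ => f z.2.1.1 z.2.1.2 :=
    hf.comp (measurable_fst.comp measurable_snd)
  have h2 : Measurable fun z : (ℝ × ℝ) × (ℝ × ℝ) × ℝ × ℝ => g z.2.2.1 z.2.2.2 :=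
    hg.comp (measurable_snd.comp measurable_snd)
  have mg1 : Measurable fun z : (ℝ × ℝ) × (ℝ × ℝ) × ℝ × ℝ =>
      gauss v (z.1.1 - (z.2.1.1 + z.2.2.1) / 2) :=
    (measurable_gauss v).comp (by fun_prop)
  have mg2 : Measurable fun z : (ℝ × ℝ) × (ℝ × ℝ) × ℝ × ℝ =>
      gauss w (z.1.2 - (z.2.1.2 + z.2.2.2) / 2) :=
    (measurable_gauss w).comp (by fun_prop)
  have mmax : Measurable fun z : (ℝ × ℝ) × (ℝ × ℝ) × ℝ × ℝ => max z.2.1.1 (0:ℝ) := by fun_prop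
  have mexp : Measurable fun z : (ℝ × ℝ) × (ℝ × ℝ) × ℝ × ℝ => Real.exp z.1.1 := by fun_prop
  exact (ENNReal.measurable_ofReal.comp mexp).mul
    (((((ENNReal.measurable_ofReal.comp mg1).mul (ENNReal.measurable_ofReal.comp mg2)).mul
      (ENNReal.measurable_ofReal.comp mmax)).mul (ENNReal.measurable_ofReal.comp h1)).mul
      (ENNReal.measurable_ofReal.comp h2))
set_option maxHeartbeats 2000000 in
theorem stmt_2 (σx σy : ℝ) (hσx : 0 < σx) (hσy : 0 < σy) :
    ∃ C > 0, ∀ f g : ℝ → ℝ → ℝ,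
      (∀ x y, 0 ≤ f x y) → (∀ x y, 0 ≤ g x y) →
      Measurable (fun p : ℝ × ℝ => f p.1 p.2) →
      Measurable (fun p : ℝ × ℝ => g p.1 p.2) →
      Integrable (fun p : ℝ × ℝ => (1 + Real.exp p.1) * f p.1 p.2) →
      Integrable (fun p : ℝ × ℝ => (1 + Real.exp p.1) * g p.1 p.2) →
      (∫ x : ℝ, ∫ y : ℝ, Real.exp x *
          ∫ x₁ : ℝ, ∫ y₁ : ℝ, ∫ x₂ : ℝ, ∫ y₂ : ℝ,
            gauss (σx ^ 2) (x - (x₁ + x₂) / 2) * gauss (σy ^ 2) (y - (y₁ + y₂) / 2) *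
              max x₁ 0 * f x₁ y₁ * g x₂ y₂)
        ≤ C * (∫ p : ℝ × ℝ, (1 + Real.exp p.1) * f p.1 p.2) *
            (∫ p : ℝ × ℝ, (1 + Real.exp p.1) * g p.1 p.2) := by
  have hv : (0:ℝ) < σx ^ 2 := by positivity
  have hw : (0:ℝ) < σy ^ 2 := by positivity
  set v := σx ^ 2 with hv_def
  set w := σy ^ 2 with hw_def
  refine ⟨2 * Real.exp (v / 2), by positivity, ?_⟩
  intro f g hf0 hg0 hfm hgm hfi hgi
  set A := ∫ p : ℝ × ℝ, (1 + Real.exp p.1) * f p.1 p.2 with hA_def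
  set B := ∫ p : ℝ × ℝ, (1 + Real.exp p.1) * g p.1 p.2 with hB_def
  have hA0 : 0 ≤ A := integral_nonneg fun p => mul_nonneg (by positivity) (hf0 _ _)
  have hB0 : 0 ≤ B := integral_nonneg fun p => mul_nonneg (by positivity) (hg0 _ _)
  -- nonnegativity of all nested real integrands
  have h6 : ∀ x y x₁ y₁ x₂ y₂ : ℝ, 0 ≤ gauss v (x - (x₁ + x₂) / 2) *
      gauss w (y - (y₁ + y₂) / 2) * max x₁ 0 * f x₁ y₁ * g x₂ y₂ := by
    intro x y x₁ y₁ x₂ y₂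
    have := gauss_nonneg v (x - (x₁ + x₂) / 2)
    have := gauss_nonneg w (y - (y₁ + y₂) / 2)
    have := hf0 x₁ y₁
    have := hg0 x₂ y₂
    have : (0:ℝ) ≤ max x₁ 0 := le_max_right _ _
    apply mul_nonneg (mul_nonneg (mul_nonneg (mul_nonneg _ _) _) _) <;> assumption
  have h5 : ∀ x y x₁ y₁ x₂ : ℝ, 0 ≤ ∫ y₂ : ℝ, gauss v (x - (x₁ + x₂) / 2) *
      gauss w (y - (y₁ + y₂) / 2) * max x₁ 0 * f x₁ y₁ * g x₂ y₂ :=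
    fun x y x₁ y₁ x₂ => integral_nonneg fun y₂ => h6 x y x₁ y₁ x₂ y₂
  have h4 : ∀ x y x₁ y₁ : ℝ, 0 ≤ ∫ x₂ : ℝ, ∫ y₂ : ℝ, gauss v (x - (x₁ + x₂) / 2) *
      gauss w (y - (y₁ + y₂) / 2) * max x₁ 0 * f x₁ y₁ * g x₂ y₂ :=
    fun x y x₁ y₁ => integral_nonneg fun x₂ => h5 x y x₁ y₁ x₂
  have h3 : ∀ x y x₁ : ℝ, 0 ≤ ∫ y₁ : ℝ, ∫ x₂ : ℝ, ∫ y₂ : ℝ, gauss v (x - (x₁ + x₂) / 2) *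
      gauss w (y - (y₁ + y₂) / 2) * max x₁ 0 * f x₁ y₁ * g x₂ y₂ :=
    fun x y x₁ => integral_nonneg fun y₁ => h4 x y x₁ y₁
  have hT : ∀ x y : ℝ, 0 ≤ ∫ x₁ : ℝ, ∫ y₁ : ℝ, ∫ x₂ : ℝ, ∫ y₂ : ℝ,
      gauss v (x - (x₁ + x₂) / 2) * gauss w (y - (y₁ + y₂) / 2) * max x₁ 0 *
        f x₁ y₁ * g x₂ y₂ :=
    fun x y => integral_nonneg fun x₁ => h3 x y x₁
  have htop : ∀ x : ℝ, 0 ≤ ∫ y : ℝ, Real.exp x * ∫ x₁ : ℝ, ∫ y₁ : ℝ, ∫ x₂ : ℝ, ∫ y₂ : ℝ,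
      gauss v (x - (x₁ + x₂) / 2) * gauss w (y - (y₁ + y₂) / 2) * max x₁ 0 *
        f x₁ y₁ * g x₂ y₂ :=
    fun x => integral_nonneg fun y => mul_nonneg (Real.exp_nonneg x) (hT x y)
  -- Claim 1 : comparison with the nested lintegral
  have claim1 : ENNReal.ofReal (∫ x : ℝ, ∫ y : ℝ, Real.exp x *
        ∫ x₁ : ℝ, ∫ y₁ : ℝ, ∫ x₂ : ℝ, ∫ y₂ : ℝ,
          gauss v (x - (x₁ + x₂) / 2) * gauss w (y - (y₁ + y₂) / 2) *
            max x₁ 0 * f x₁ y₁ * g x₂ y₂) ≤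
      ∫⁻ x : ℝ, ∫⁻ y : ℝ, ∫⁻ x₁ : ℝ, ∫⁻ y₁ : ℝ, ∫⁻ x₂ : ℝ, ∫⁻ y₂ : ℝ,
        kernP v w f g (x, y) ((x₁, y₁), (x₂, y₂)) := by
    apply layer htop
    intro x
    apply layer (fun y => mul_nonneg (Real.exp_nonneg x) (hT x y))
    intro y
    rw [ENNReal.ofReal_mul (Real.exp_nonneg x)]
    have hker : ENNReal.ofReal (∫ x₁ : ℝ, ∫ y₁ : ℝ, ∫ x₂ : ℝ, ∫ y₂ : ℝ,
        gauss v (x - (x₁ + x₂) / 2) * gauss w (y - (y₁ + y₂) / 2) * max x₁ 0 *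
          f x₁ y₁ * g x₂ y₂) ≤
        ∫⁻ x₁ : ℝ, ∫⁻ y₁ : ℝ, ∫⁻ x₂ : ℝ, ∫⁻ y₂ : ℝ, kern v w f g x y x₁ y₁ x₂ y₂ := by
      apply layer (h3 x y); intro x₁
      apply layer (h4 x y x₁); intro y₁
      apply layer (h5 x y x₁ y₁); intro x₂
      apply layer (fun y₂ => h6 x y x₁ y₁ x₂ y₂); intro y₂
      unfold kern
      rw [ENNReal.ofReal_mul (mul_nonneg (mul_nonneg (mul_nonneg (gauss_nonneg _ _)
          (gauss_nonneg _ _)) (le_max_right _ _)) (hf0 _ _)),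
        ENNReal.ofReal_mul (mul_nonneg (mul_nonneg (gauss_nonneg _ _) (gauss_nonneg _ _))
          (le_max_right _ _)),
        ENNReal.ofReal_mul (mul_nonneg (gauss_nonneg _ _) (gauss_nonneg _ _)),
        ENNReal.ofReal_mul (gauss_nonneg _ _)]
    calc ENNReal.ofReal (Real.exp x) * ENNReal.ofReal (∫ x₁ : ℝ, ∫ y₁ : ℝ, ∫ x₂ : ℝ, ∫ y₂ : ℝ,
          gauss v (x - (x₁ + x₂) / 2) * gauss w (y - (y₁ + y₂) / 2) * max x₁ 0 *
            f x₁ y₁ * g x₂ y₂)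
        ≤ ENNReal.ofReal (Real.exp x) *
          ∫⁻ x₁ : ℝ, ∫⁻ y₁ : ℝ, ∫⁻ x₂ : ℝ, ∫⁻ y₂ : ℝ, kern v w f g x y x₁ y₁ x₂ y₂ :=
          mul_le_mul_right hker _
      _ = ∫⁻ x₁ : ℝ, ∫⁻ y₁ : ℝ, ∫⁻ x₂ : ℝ, ∫⁻ y₂ : ℝ,
            kernP v w f g (x, y) ((x₁, y₁), (x₂, y₂)) := by
          simp_rw [← lintegral_const_mul' (ENNReal.ofReal (Real.exp x)) _
            ENNReal.ofReal_ne_top]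
          rfl
    -- measurability facts
  have m1 : Measurable (Function.uncurry (kernP v w f g)) :=
    measurable_kernP v w hfm hgm
  have munc : ∀ p : ℝ × ℝ, Measurable (kernP v w f g p) :=
    fun p => m1.of_uncurry_left
  -- un-nesting the inner four integrals
  have E1 : ∀ p : ℝ × ℝ, (∫⁻ q : (ℝ × ℝ) × ℝ × ℝ, kernP v w f g p q) =
      ∫⁻ x₁ : ℝ, ∫⁻ y₁ : ℝ, ∫⁻ x₂ : ℝ, ∫⁻ y₂ : ℝ, kernP v w f g p ((x₁, y₁), (x₂, y₂)) := by
    intro p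
    have step0 : Measurable fun z : ((ℝ × ℝ) × ℝ) × ℝ => kernP v w f g p (z.1.1, (z.1.2, z.2)) :=
      (munc p).comp
        (show Measurable fun z : ((ℝ × ℝ) × ℝ) × ℝ => (z.1.1, (z.1.2, z.2)) by fun_prop)
    have step1 : Measurable fun r : (ℝ × ℝ) × ℝ => ∫⁻ y₂ : ℝ, kernP v w f g p (r.1, (r.2, y₂)) :=
      Measurable.lintegral_prod_right
        (f := fun r : (ℝ × ℝ) × ℝ => fun y₂ : ℝ => kernP v w f g p (r.1, (r.2, y₂))) step0
    have hmeas : Measurable fun a : ℝ × ℝ => ∫⁻ x₂ : ℝ, ∫⁻ y₂ : ℝ, kernP v w f g p (a, (x₂, y₂)) :=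
      Measurable.lintegral_prod_right
        (f := fun (a : ℝ × ℝ) (x₂ : ℝ) => ∫⁻ y₂ : ℝ, kernP v w f g p (a, (x₂, y₂))) step1
    calc (∫⁻ q : (ℝ × ℝ) × ℝ × ℝ, kernP v w f g p q)
        = ∫⁻ a : ℝ × ℝ, ∫⁻ b : ℝ × ℝ, kernP v w f g p (a, b) := by
          rw [Measure.volume_eq_prod]; exact lintegral_prod _ (munc p).aemeasurable
      _ = ∫⁻ a : ℝ × ℝ, ∫⁻ x₂ : ℝ, ∫⁻ y₂ : ℝ, kernP v w f g p (a, (x₂, y₂)) :=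
          lintegral_congr fun a => by
            rw [Measure.volume_eq_prod]
            exact lintegral_prod _ (((munc p).comp (measurable_prodMk_left (α := ℝ × ℝ) (β := ℝ × ℝ))).aemeasurable)
      _ = ∫⁻ x₁ : ℝ, ∫⁻ y₁ : ℝ, ∫⁻ x₂ : ℝ, ∫⁻ y₂ : ℝ, kernP v w f g p ((x₁, y₁), (x₂, y₂)) := by
          rw [Measure.volume_eq_prod]; exact lintegral_prod _ hmeas.aemeasurable
  have hN4 : Measurable fun p : ℝ × ℝ => ∫⁻ q : (ℝ × ℝ) × ℝ × ℝ, kernP v w f g p q :=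
    m1.lintegral_prod_right
  have step_top : (∫⁻ x : ℝ, ∫⁻ y : ℝ, ∫⁻ q : (ℝ × ℝ) × ℝ × ℝ, kernP v w f g (x, y) q)
      = ∫⁻ p : ℝ × ℝ, ∫⁻ q : (ℝ × ℝ) × ℝ × ℝ, kernP v w f g p q := by
    rw [Measure.volume_eq_prod]
    exact (lintegral_prod _ hN4.aemeasurable).symm
  have swap : (∫⁻ p : ℝ × ℝ, ∫⁻ q : (ℝ × ℝ) × ℝ × ℝ, kernP v w f g p q)
      = ∫⁻ q : (ℝ × ℝ) × ℝ × ℝ, ∫⁻ p : ℝ × ℝ, kernP v w f g p q :=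
    lintegral_lintegral_swap (by rw [← Measure.volume_eq_prod]; exact m1.aemeasurable)
  -- computing the (x, y) integral
  have comp : ∀ q : (ℝ × ℝ) × ℝ × ℝ, (∫⁻ p : ℝ × ℝ, kernP v w f g p q) =
      ENNReal.ofReal ((max q.1.1 0 * f q.1.1 q.1.2 * g q.2.1 q.2.2) *
        Real.exp ((q.1.1 + q.2.1) / 2 + v / 2)) := by
    rintro ⟨⟨x₁, y₁⟩, x₂, y₂⟩
    show (∫⁻ p : ℝ × ℝ, kernP v w f g p ((x₁, y₁), (x₂, y₂))) =
      ENNReal.ofReal ((max x₁ 0 * f x₁ y₁ * g x₂ y₂) * Real.exp ((x₁ + x₂) / 2 + v / 2))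
    have hc : (0:ℝ) ≤ max x₁ 0 * f x₁ y₁ * g x₂ y₂ :=
      mul_nonneg (mul_nonneg (le_max_right x₁ 0) (hf0 x₁ y₁)) (hg0 x₂ y₂)
    have mp : Measurable fun p : ℝ × ℝ => kernP v w f g p ((x₁, y₁), (x₂, y₂)) :=
      m1.of_uncurry_right
    have point : ∀ x yy : ℝ, kernP v w f g (x, yy) ((x₁, y₁), (x₂, y₂)) =
        ENNReal.ofReal ((max x₁ 0 * f x₁ y₁ * g x₂ y₂) *
          (Real.exp x * gauss v (x - (x₁ + x₂) / 2))) *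
          ENNReal.ofReal (gauss w (yy - (y₁ + y₂) / 2)) := by
      intro x yy
      simp only [kernP, kern]
      rw [ENNReal.ofReal_mul hc,
        ENNReal.ofReal_mul (mul_nonneg (le_max_right x₁ 0) (hf0 x₁ y₁)),
        ENNReal.ofReal_mul (le_max_right x₁ 0),
        ENNReal.ofReal_mul (Real.exp_nonneg x)]
      ring
    rw [Measure.volume_eq_prod, lintegral_prod _ mp.aemeasurable]
    simp_rw [point, lintegral_const_mul' _ _ ENNReal.ofReal_ne_top, lintegral_gauss hw, mul_one,
      ENNReal.ofReal_mul hc]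
    rw [lintegral_const_mul' _ _ ENNReal.ofReal_ne_top, lintegral_exp_gauss hv,
      ← ENNReal.ofReal_mul hc]
  -- the pointwise bound
  have bnd : ∀ q : (ℝ × ℝ) × ℝ × ℝ,
      ENNReal.ofReal ((max q.1.1 0 * f q.1.1 q.1.2 * g q.2.1 q.2.2) *
        Real.exp ((q.1.1 + q.2.1) / 2 + v / 2)) ≤
      ENNReal.ofReal (2 * Real.exp (v / 2)) *
        (ENNReal.ofReal ((1 + Real.exp q.1.1) * f q.1.1 q.1.2) *
          ENNReal.ofReal ((1 + Real.exp q.2.1) * g q.2.1 q.2.2)) := by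
    rintro ⟨⟨x₁, y₁⟩, x₂, y₂⟩
    show ENNReal.ofReal ((max x₁ 0 * f x₁ y₁ * g x₂ y₂) * Real.exp ((x₁ + x₂) / 2 + v / 2)) ≤
      ENNReal.ofReal (2 * Real.exp (v / 2)) *
        (ENNReal.ofReal ((1 + Real.exp x₁) * f x₁ y₁) *
          ENNReal.ofReal ((1 + Real.exp x₂) * g x₂ y₂))
    rw [← ENNReal.ofReal_mul (mul_nonneg (by positivity) (hf0 x₁ y₁)),
      ← ENNReal.ofReal_mul (by positivity : (0:ℝ) ≤ 2 * Real.exp (v / 2))]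
    apply ENNReal.ofReal_le_ofReal
    calc (max x₁ 0 * f x₁ y₁ * g x₂ y₂) * Real.exp ((x₁ + x₂) / 2 + v / 2)
        = (Real.exp ((x₁ + x₂) / 2) * max x₁ 0) * (f x₁ y₁ * g x₂ y₂ * Real.exp (v / 2)) := by
          rw [Real.exp_add]; ring
      _ ≤ (2 * ((1 + Real.exp x₁) * (1 + Real.exp x₂))) *
          (f x₁ y₁ * g x₂ y₂ * Real.exp (v / 2)) :=
          mul_le_mul_of_nonneg_right (key_bound x₁ x₂)
            (mul_nonneg (mul_nonneg (hf0 _ _) (hg0 _ _)) (Real.exp_nonneg _))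
      _ = 2 * Real.exp (v / 2) *
          ((1 + Real.exp x₁) * f x₁ y₁ * ((1 + Real.exp x₂) * g x₂ y₂)) := by ring
  -- evaluation of the bound integral
  have hF' : Measurable fun a : ℝ × ℝ => ENNReal.ofReal ((1 + Real.exp a.1) * f a.1 a.2) :=
    ENNReal.measurable_ofReal.comp
      ((measurable_const.add (Real.measurable_exp.comp measurable_fst)).mul hfm)
  have hG' : Measurable fun a : ℝ × ℝ => ENNReal.ofReal ((1 + Real.exp a.1) * g a.1 a.2) :=
    ENNReal.measurable_ofReal.comp
      ((measurable_const.add (Real.measurable_exp.comp measurable_fst)).mul hgm)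
  have fin : (∫⁻ q : (ℝ × ℝ) × ℝ × ℝ, ENNReal.ofReal (2 * Real.exp (v / 2)) *
      (ENNReal.ofReal ((1 + Real.exp q.1.1) * f q.1.1 q.1.2) *
        ENNReal.ofReal ((1 + Real.exp q.2.1) * g q.2.1 q.2.2)))
      = ENNReal.ofReal (2 * Real.exp (v / 2)) * (ENNReal.ofReal A * ENNReal.ofReal B) := by
    rw [lintegral_const_mul' _ _ ENNReal.ofReal_ne_top]
    congr 1
    rw [Measure.volume_eq_prod, lintegral_prod_mul hF'.aemeasurable hG'.aemeasurable,
      ← ofReal_integral_eq_lintegral_ofReal hfi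
        (ae_of_all _ fun p => mul_nonneg (by positivity) (hf0 _ _)),
      ← ofReal_integral_eq_lintegral_ofReal hgi
        (ae_of_all _ fun p => mul_nonneg (by positivity) (hg0 _ _))]
  -- putting everything together
  have main2 : (∫⁻ x : ℝ, ∫⁻ y : ℝ, ∫⁻ x₁ : ℝ, ∫⁻ y₁ : ℝ, ∫⁻ x₂ : ℝ, ∫⁻ y₂ : ℝ,
      kernP v w f g (x, y) ((x₁, y₁), (x₂, y₂)))
      ≤ ENNReal.ofReal (2 * Real.exp (v / 2) * A * B) := by
    have e1 : (∫⁻ x : ℝ, ∫⁻ y : ℝ, ∫⁻ x₁ : ℝ, ∫⁻ y₁ : ℝ, ∫⁻ x₂ : ℝ, ∫⁻ y₂ : ℝ,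
        kernP v w f g (x, y) ((x₁, y₁), (x₂, y₂)))
        = ∫⁻ x : ℝ, ∫⁻ y : ℝ, ∫⁻ q : (ℝ × ℝ) × ℝ × ℝ, kernP v w f g (x, y) q :=
      lintegral_congr fun x => lintegral_congr fun y => (E1 (x, y)).symm
    rw [e1, step_top, swap, lintegral_congr comp]
    calc (∫⁻ q : (ℝ × ℝ) × ℝ × ℝ,
        ENNReal.ofReal ((max q.1.1 0 * f q.1.1 q.1.2 * g q.2.1 q.2.2) *
          Real.exp ((q.1.1 + q.2.1) / 2 + v / 2)))
        ≤ ∫⁻ q : (ℝ × ℝ) × ℝ × ℝ, ENNReal.ofReal (2 * Real.exp (v / 2)) *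
          (ENNReal.ofReal ((1 + Real.exp q.1.1) * f q.1.1 q.1.2) *
            ENNReal.ofReal ((1 + Real.exp q.2.1) * g q.2.1 q.2.2)) := lintegral_mono bnd
      _ = ENNReal.ofReal (2 * Real.exp (v / 2)) * (ENNReal.ofReal A * ENNReal.ofReal B) := fin
      _ = ENNReal.ofReal (2 * Real.exp (v / 2) * A * B) := by
          rw [ENNReal.ofReal_mul (mul_nonneg (by positivity) hA0),
            ENNReal.ofReal_mul (by positivity : (0:ℝ) ≤ 2 * Real.exp (v / 2)), mul_assoc]
  have final := claim1.trans main2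
  have hRHS0 : (0:ℝ) ≤ 2 * Real.exp (v / 2) * A * B :=
    mul_nonneg (mul_nonneg (by positivity) hA0) hB0
  exact (ENNReal.ofReal_le_ofReal_iff hRHS0).mp final
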